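/- Let ν, μ be finite measures on X and let Q be a bounded nonnegative kernel-type operator, realized here as two nonnegative bounded measurable functions h, hf on X with |hf| ≤ h pointwise and μ(h) > 0, ν(h) > 0, representing Q(G) and Q(G f) for ‖f‖_∞ ≤ 1. Then for the residual term R = ((μ + ν)(hf)/(μ + ν)(h)) − (μ(hf)/μ(h)), one has |R| ≤ (ν(h)/(μ+ν)(h)) · osc(hf/h), where osc(g) = sup g − inf g on the support where h > 0. -/

import Mathlib

open MeasureTheory

/-- Residual bound: `|((μ+ν)(hf)/(μ+ν)(h)) − μ(hf)/μ(h)| ≤ (ν(h)/(μ+ν)(h)) · osc(hf/h)`. -/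
theorem stmt2 {X : Type*} [MeasurableSpace X] [Nonempty X]
    (μ ν : Measure X) [IsFiniteMeasure μ] [IsFiniteMeasure ν]
    (h hf : X → ℝ) (hmeas : Measurable h) (hfmeas : Measurable hf)
    (hpos : ∀ x, 0 < h x) (hbdd : ∃ C, ∀ x, h x ≤ C)
    (hdom : ∀ x, |hf x| ≤ h x)
    (hμh : 0 < ∫ x, h x ∂μ) (hνh : 0 < ∫ x, h x ∂ν) :
    |((∫ x, hf x ∂μ) + (∫ x, hf x ∂ν)) / ((∫ x, h x ∂μ) + (∫ x, h x ∂ν))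
        - (∫ x, hf x ∂μ) / (∫ x, h x ∂μ)|
      ≤ ((∫ x, h x ∂ν) / ((∫ x, h x ∂μ) + (∫ x, h x ∂ν)))
          * ((⨆ x, hf x / h x) - (⨅ x, hf x / h x)) := by
  obtain ⟨Cb, hCb⟩ := hbdd
  set g : X → ℝ := fun x => hf x / h x with hg
  have hgle : ∀ x, |g x| ≤ 1 := fun x => by
    rw [abs_div, abs_of_pos (hpos x), div_le_one (hpos x)]
    exact hdom x
  have hbddA : BddAbove (Set.range g) :=
    ⟨1, by rintro _ ⟨x, rfl⟩; exact (abs_le.mp (hgle x)).2⟩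
  have hbddB : BddBelow (Set.range g) :=
    ⟨-1, by rintro _ ⟨x, rfl⟩; exact (abs_le.mp (hgle x)).1⟩
  set M := ⨆ x, g x with hM
  set m := ⨅ x, g x with hm
  have hgM : ∀ x, g x ≤ M := fun x => le_ciSup hbddA x
  have hgm : ∀ x, m ≤ g x := fun x => ciInf_le hbddB x
  have heq : ∀ x, hf x = g x * h x := fun x => by
    simp only [hg]; exact (div_mul_cancel₀ _ (hpos x).ne').symm
  -- integrability
  have hint : ∀ (κ : Measure X) [IsFiniteMeasure κ], Integrable h κ := by
    intro κ _
    refine ⟨hmeas.aestronglyMeasurable, ?_⟩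
    exact HasFiniteIntegral.of_bounded (C := Cb)
      (ae_of_all _ fun x => by
        rw [Real.norm_eq_abs, abs_of_pos (hpos x)]; exact hCb x)
  have hfint : ∀ (κ : Measure X) [IsFiniteMeasure κ], Integrable hf κ := by
    intro κ _
    refine ⟨hfmeas.aestronglyMeasurable, ?_⟩
    exact HasFiniteIntegral.of_bounded (C := Cb)
      (ae_of_all _ fun x => (hdom x).trans (hCb x))
  -- integral bounds
  have bound : ∀ (κ : Measure X) [IsFiniteMeasure κ],
      m * ∫ x, h x ∂κ ≤ (∫ x, hf x ∂κ) ∧ (∫ x, hf x ∂κ) ≤ M * ∫ x, h x ∂κ := by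
    intro κ _
    constructor
    · rw [← integral_const_mul]
      refine integral_mono ((hint κ).const_mul m) (hfint κ) fun x => ?_
      rw [heq x]
      exact mul_le_mul_of_nonneg_right (hgm x) (hpos x).le
    · rw [← integral_const_mul]
      refine integral_mono (hfint κ) ((hint κ).const_mul M) fun x => ?_
      rw [heq x]
      exact mul_le_mul_of_nonneg_right (hgM x) (hpos x).le
  set A := ∫ x, hf x ∂μ
  set B := ∫ x, h x ∂μ
  set C := ∫ x, hf x ∂ν
  set D := ∫ x, h x ∂ν
  obtain ⟨h1, h2⟩ := bound μ
  obtain ⟨h3, h4⟩ := bound ν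
  have hBD : (0:ℝ) < B + D := by linarith
  have key : (A + C)/(B + D) - A/B = (B*C - A*D)/(B*(B+D)) := by
    field_simp
    ring
  rw [key, abs_div, abs_of_pos (by positivity : (0:ℝ) < B*(B+D))]
  rw [div_le_iff₀ (by positivity)]
  have habs : |B*C - A*D| ≤ B*D*(M - m) := by
    rw [abs_le]
    constructor <;> nlinarith
  calc |B*C - A*D| ≤ B*D*(M-m) := habs
    _ = D / (B + D) * (M - m) * (B * (B + D)) := by field_simp
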